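/- If α has cardinality μ, then the set of all near-litters in α has cardinality exactly μ. -/

import Mathlib

open Cardinal Set

universe u

namespace NFPaper

variable {α : Type u}

/-- A set is small if its cardinality is less than `κ`. -/
def SmallSet (κ : Cardinal.{u}) {β : Type u} (s : Set β) : Prop := #s < κ

/-- A near-litter: a subset of `α` whose symmetric difference with some litter
(member of the litter partition `ℒ`) is small. -/
def IsNearLitter (κ : Cardinal.{u}) (ℒ : Set (Set α)) (N : Set α) : Prop :=
  ∃ L ∈ ℒ, SmallSet κ (symmDiff N L)

/-- Membership in the group `G` of all permutations of `α` under which the image of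
every litter is a near-litter. -/
def Allowable (κ : Cardinal.{u}) (ℒ : Set (Set α)) (ρ : Equiv.Perm α) : Prop :=
  ∀ L ∈ ℒ, IsNearLitter κ ℒ (ρ '' L)

/-- If `κ` is an uncountable regular cardinal, `μ` is a strong limit cardinal with
`κ < μ` and cofinality at least `κ`, and `α` has cardinality `μ`, then the set of all
near-litters in `α` has cardinality exactly `μ`. -/
theorem card_near_litters
    (κ μ : Cardinal.{u}) (hreg : κ.IsRegular) (hunc : ℵ₀ < κ)
    (hsl : μ.IsStrongLimit) (hκμ : κ < μ) (hcof : κ ≤ μ.ord.cof)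
    (α : Type u) (hα : #α = μ)
    (ℒ : Set (Set α)) (hpart : Setoid.IsPartition ℒ)
    (hsize : ∀ L ∈ ℒ, #L = κ) :
    #{N : Set α | IsNearLitter κ ℒ N} = μ := by
  have hμinf : ℵ₀ ≤ μ := hsl.aleph0_le
  -- choose litter containing each point
  have hpart2 : ∀ a : α, ∃ b, (b ∈ ℒ ∧ a ∈ b) ∧ ∀ y, (y ∈ ℒ ∧ a ∈ y) → y = b :=
    fun a => hpart.2 a
  choose L hLpair hLuniq using hpart2
  have hLmem : ∀ a, L a ∈ ℒ := fun a => (hLpair a).1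
  have hLa : ∀ a, a ∈ L a := fun a => (hLpair a).2
  apply le_antisymm
  · -- upper bound
    choose gL hgLmem hgsmall using fun N : {N : Set α | IsNearLitter κ ℒ N} => N.2
    have hinj : Function.Injective
        (fun N : {N : Set α | IsNearLitter κ ℒ N} =>
          ((⟨gL N, hgLmem N⟩ : ℒ), (⟨symmDiff (N : Set α) (gL N), hgsmall N⟩ :
            {s : Set α // #s < κ}))) := by
      intro N₁ N₂ h
      simp only [Prod.mk.injEq, Subtype.mk.injEq] at h
      obtain ⟨h1, h2⟩ := h
      replace h2 := congrArg Subtype.val h2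
      dsimp only at h2
      rw [h1] at h2
      have := symmDiff_left_injective (gL N₂) h2
      exact Subtype.ext this
    have hle := mk_le_of_injective hinj
    rw [mk_prod, lift_id, lift_id] at hle
    have hℒ : #ℒ ≤ μ := by
      -- each litter is nonempty; choose a point
      have hne : ∀ l : ℒ, ∃ a : α, a ∈ (l : Set α) := by
        intro l
        refine Set.nonempty_iff_ne_empty.2 (fun h => hpart.1 (h ▸ l.2))
      choose pt hpt using hne
      have : Function.Injective pt := by
        intro l₁ l₂ h
        have e1 : (l₁ : Set α) = L (pt l₁) := hLuniq (pt l₁) _ ⟨l₁.2, hpt l₁⟩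
        have e2 : (l₂ : Set α) = L (pt l₁) := hLuniq (pt l₁) _ ⟨l₂.2, h ▸ hpt l₂⟩
        exact Subtype.ext (e1.trans e2.symm)
      calc #ℒ ≤ #α := mk_le_of_injective this
        _ = μ := hα
    have hsmall : #{s : Set α // #s < κ} ≤ μ := by
      have h2 : ∀ x < #α, (2 ^ x) < #α := by
        rw [hα]; exact fun x hx => hsl.2 hx
      have := mk_subset_mk_lt_cof h2
      rw [hα] at this
      rw [← this]
      exact mk_subtype_mono fun s hs => lt_of_lt_of_le hs hcof
    calc #{N : Set α | IsNearLitter κ ℒ N} ≤ #ℒ * #{s : Set α // #s < κ} := hle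
      _ ≤ μ * μ := mul_le_mul' hℒ hsmall
      _ = μ := mul_eq_self hμinf
  · -- lower bound: a ↦ L a \ {a}
    have hNL : ∀ a : α, IsNearLitter κ ℒ (L a \ {a}) := by
      intro a
      refine ⟨L a, hLmem a, ?_⟩
      have : symmDiff (L a \ {a}) (L a) = {a} := by
        rw [symmDiff_def]
        ext x
        simp only [Set.mem_union, Set.mem_diff, Set.mem_singleton_iff]
        constructor
        · rintro (⟨⟨hx, hne⟩, hnx⟩ | ⟨hx, hnx⟩)
          · exact absurd hx hnx
          · by_contra h
            exact hnx ⟨hx, h⟩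
        · rintro rfl
          right
          exact ⟨hLa x, fun h => h.2 rfl⟩
      rw [SmallSet, this, mk_singleton]
      exact one_lt_aleph0.trans hunc
    have hinj : Function.Injective (fun a : α =>
        (⟨L a \ {a}, hNL a⟩ : {N : Set α | IsNearLitter κ ℒ N})) := by
      intro a b h
      simp only [Subtype.mk.injEq] at h
      by_contra hne
      by_cases hL : L a = L b
      · have hb : b ∈ L a \ {a} := ⟨hL ▸ hLa b, fun hs => hne (hs.symm ▸ rfl)⟩
        rw [h] at hb
        exact hb.2 rfl
      · -- L a and L b distinct, pick c ∈ L a, c ≠ a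
        have : 1 < #(L a) := by
          rw [hsize _ (hLmem a)]
          exact one_lt_aleph0.trans hunc
        have hex : ∃ c : α, c ∈ L a ∧ c ≠ a := by
          by_contra hc
          push_neg at hc
          have : L a ⊆ {a} := fun x hx => by
            by_contra hx'
            exact hx' (hc x hx)
          have := mk_le_mk_of_subset this
          rw [mk_singleton] at this
          exact absurd (lt_of_lt_of_le ‹1 < #(L a)› this) (lt_irrefl 1)
        obtain ⟨c, hc, hca⟩ := hex
        have hc1 : c ∈ L a \ {a} := ⟨hc, hca⟩
        rw [h] at hc1
        have e1 : L a = L c := hLuniq c _ ⟨hLmem a, hc⟩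
        have e2 : L b = L c := hLuniq c _ ⟨hLmem b, hc1.1⟩
        exact hL (e1.trans e2.symm)
    have := mk_le_of_injective hinj
    rwa [hα] at this


end NFPaper
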